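/- arXiv:1606.00038 — 4 statements merged into one kernel-verified Lean document; each statement's English description precedes it below -/
import Mathlib

section
/- Let G be a finite group, K a normal subgroup of G, r a prime dividing |K| such that r² does not divide |G|, and p a prime dividing |G| such that p does not divide |K| and p does not divide r − 1. Then G has an element of order p·r. -/
theorem exists_elem_order_mul_of_frattini {G : Type*} [Group G] [Finite G]
    (K : Subgroup G) (hK : K.Normal) {r p : ℕ} (hr : r.Prime) (hp : p.Prime)
    (hrK : r ∣ Nat.card K) (hr2 : ¬ r ^ 2 ∣ Nat.card G)
    (hpG : p ∣ Nat.card G) (hpK : ¬ p ∣ Nat.card K) (hpr : ¬ p ∣ r - 1) :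
    ∃ g : G, orderOf g = p * r := by
  haveI := Fact.mk hr
  haveI := Fact.mk hp
  have hKG : Nat.card K ∣ Nat.card G := Subgroup.card_subgroup_dvd_card K
  have hKne : Nat.card K ≠ 0 := Nat.card_pos.ne'
  -- Sylow r-subgroup of K has order r
  obtain ⟨R⟩ : Nonempty (Sylow r K) := inferInstance
  have hfact : (Nat.card K).factorization r = 1 := by
    have h1 : 1 ≤ (Nat.card K).factorization r := by
      rw [← hr.pow_dvd_iff_le_factorization hKne, pow_one]; exact hrK
    have h2 : (Nat.card K).factorization r ≤ 1 := by
      by_contra h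
      exact hr2 (((hr.pow_dvd_iff_le_factorization hKne).mpr (by omega)).trans hKG)
    omega
  have hRcard : Nat.card R = r := by
    rw [R.card_eq_multiplicity, hfact, pow_one]
  set R' : Subgroup G := (R : Subgroup K).map K.subtype with hR'
  have hR'card : Nat.card R' = r := by
    rw [← hRcard]
    exact (Nat.card_congr ((R : Subgroup K).equivMapOfInjective K.subtype
      K.subtype_injective).toEquiv).symm
  set N : Subgroup G := Subgroup.normalizer (R' : Set G) with hN
  have hFrat : N ⊔ K = ⊤ := Sylow.normalizer_sup_eq_top R
  -- p divides |N|
  have hpN : p ∣ Nat.card N := by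
    have hsurj : Function.Surjective ((QuotientGroup.mk' K).comp N.subtype) := by
      intro q
      obtain ⟨g, rfl⟩ := QuotientGroup.mk'_surjective K q
      have : g ∈ N ⊔ K := hFrat ▸ Subgroup.mem_top g
      rw [← SetLike.mem_coe, Subgroup.mul_normal] at this
      obtain ⟨n, hn, k, hk, rfl⟩ := this
      refine ⟨⟨n, hn⟩, ?_⟩
      simp only [MonoidHom.comp_apply, QuotientGroup.mk'_apply, Subgroup.coe_subtype, QuotientGroup.eq, mul_inv_rev]
      simpa [inv_mul_cancel_left] using hk
    have h1 : Nat.card (G ⧸ K) ∣ Nat.card N :=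
      Subgroup.card_dvd_of_surjective _ hsurj
    have h2 : p ∣ Nat.card (G ⧸ K) := by
      have := Subgroup.card_eq_card_quotient_mul_card_subgroup K
      rw [this] at hpG
      exact (hp.dvd_mul.mp hpG).resolve_right hpK
    exact h2.trans h1
  -- element of order p in N
  obtain ⟨g, hg⟩ := exists_prime_orderOf_dvd_card' (G := N) p hpN
  -- R' as subgroup of N, normal, of order r
  set S : Subgroup N := R'.subgroupOf N with hS
  haveI : S.Normal := Subgroup.normal_in_normalizer
  have hScard : Nat.card S = r := by
    rw [← hR'card]
    exact Nat.card_congr (Subgroup.subgroupOfEquivOfLe Subgroup.le_normalizer).toEquiv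
  obtain ⟨x, hx⟩ := exists_prime_orderOf_dvd_card' (G := S) r (hScard ▸ dvd_refl r)
  -- conjugation automorphism is trivial
  haveI : IsCyclic S := isCyclic_of_prime_card hScard
  have hAut : Nat.card (MulAut S) = r - 1 := by
    rw [IsCyclic.card_mulAut, hScard, Nat.totient_prime hr]
  have hφ : MulAut.conjNormal g = (1 : MulAut S) := by
    have h1 : orderOf (MulAut.conjNormal g : MulAut S) ∣ p := by
      rw [orderOf_dvd_iff_pow_eq_one, ← map_pow, ← hg, pow_orderOf_eq_one, map_one]
    have h2 : orderOf (MulAut.conjNormal g : MulAut S) ∣ r - 1 :=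
      hAut ▸ orderOf_dvd_natCard _
    rcases (Nat.Prime.eq_one_or_self_of_dvd hp _ h1) with h | h
    · exact orderOf_eq_one_iff.mp h
    · exact absurd (h ▸ h2) hpr
  have hcomm : Commute (g : G) ((x : N) : G) := by
    have := DFunLike.congr_fun hφ x
    have hx' : (MulAut.conjNormal g x : N) = x := by rw [this]; rfl
    have : (g : N) * (x : N) * (g : N)⁻¹ = (x : N) := by
      rw [← MulAut.conjNormal_apply]; exact_mod_cast hx'
    have h2 : (g : N) * (x : N) = (x : N) * (g : N) :=
      mul_inv_eq_iff_eq_mul.mp this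
    exact congrArg (Subtype.val) h2
  have hog : orderOf ((g : G)) = p := by
    rw [← hg]; exact orderOf_injective N.subtype N.subtype_injective g
  have hox : orderOf (((x : N)) : G) = r := by
    rw [← hx]
    rw [← orderOf_injective S.subtype S.subtype_injective x]
    exact orderOf_injective N.subtype N.subtype_injective _
  have hpr' : p ≠ r := fun h => hpK (h ▸ hrK)
  refine ⟨(g : G) * ((x : N) : G), ?_⟩
  rw [hcomm.orderOf_mul_eq_mul_orderOf_of_coprime (by
    rw [hog, hox]; exact (Nat.coprime_primes hp hr).mpr hpr'), hog, hox]
end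

section
/- Let G be a finite group with |G| = 2⁴·3·5²·7·11³·19 and degree pattern D(G) = (3,2,3,1,2,1), i.e., deg_G(2)=3, deg_G(3)=2, deg_G(5)=3, deg_G(7)=1, deg_G(11)=2, deg_G(19)=1. Then every solvable normal subgroup K of G satisfies π(K) ⊆ {2,3,5,11}; in particular, neither 7 nor 19 divides |K|. -/
open scoped MatrixGroups

/-- Two distinct primes `p` and `q` dividing `|G|` are adjacent in the prime graph `Γ(G)`
of a finite group `G` iff `G` has an element of order `p * q`. -/
def primeGraphAdj (G : Type*) [Group G] (p q : ℕ) : Prop :=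
  p ≠ q ∧ p.Prime ∧ q.Prime ∧ p ∣ Nat.card G ∧ q ∣ Nat.card G ∧ ∃ g : G, orderOf g = p * q

open scoped Classical in
/-- The degree of a vertex `p` in the prime graph of `G`: the number of primes dividing `|G|`
that are adjacent to `p`. -/
noncomputable def primeGraphDeg (G : Type*) [Group G] (p : ℕ) : ℕ :=
  ((Nat.card G).primeFactors.filter (fun r => primeGraphAdj G p r)).card

universe u

section Aux

variable {G : Type*} [Group G]

/-- If `y` has prime order `q` and normalizes a finite subgroup `M` with
`q ∤ |M| - 1`, then `y` has a nontrivial fixed point in `M` under conjugation. -/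
lemma aux_fixed [Finite G] {q : ℕ} (hq : q.Prime) {y : G} (hy : orderOf y = q)
    {M : Subgroup G} (hyM : y ∈ (Subgroup.normalizer (M : Set G))) (hM : ¬ q ∣ Nat.card M - 1) :
    ∃ m : G, m ∈ M ∧ m ≠ 1 ∧ y * m * y⁻¹ = m := by
  by_contra hcon
  push_neg at hcon
  have hmem : ∀ m : G, m ∈ M ↔ y * m * y⁻¹ ∈ M := Subgroup.mem_normalizer_iff.mp hyM
  have hmem' : ∀ m : G, m ∈ M ↔ y⁻¹ * m * y ∈ M := by
    intro m
    have := (Subgroup.mem_normalizer_iff.mp ((Subgroup.normalizer (M : Set G)).inv_mem hyM)) m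
    simpa using this
  let e : Equiv.Perm ↥M :=
    { toFun := fun m => ⟨y * m * y⁻¹, (hmem m).mp m.2⟩
      invFun := fun m => ⟨y⁻¹ * m * y, (hmem' m).mp m.2⟩
      left_inv := fun m => by ext; simp [mul_assoc]
      right_inv := fun m => by ext; simp [mul_assoc] }
  have e_apply : ∀ m : ↥M, (e m : G) = y * m * y⁻¹ := fun _ => rfl
  have hpow : ∀ (n : ℕ) (m : ↥M), ((e ^ n) m : G) = y ^ n * m * (y ^ n)⁻¹ := by
    intro n
    induction n with
    | zero => intro m; simp
    | succ n ih =>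
        intro m
        rw [pow_succ, Equiv.Perm.mul_apply, ih (e m), e_apply]
        rw [pow_succ]
        group
  have heq : e ^ q = 1 := by
    ext m
    have h1 := hpow q m
    have hyq : y ^ q = 1 := by rw [← hy]; exact pow_orderOf_eq_one y
    rw [hyq] at h1
    simp only [Equiv.Perm.coe_one, id_eq]
    simpa using h1
  haveI : Fact q.Prime := ⟨hq⟩
  set H := Subgroup.zpowers e with hHdef
  have hH : IsPGroup q H := by
    intro g
    refine ⟨1, ?_⟩
    have hgq : (g : Equiv.Perm ↥M) ^ q = 1 := by
      obtain ⟨k, hk⟩ := Subgroup.mem_zpowers_iff.mp g.2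
      rw [← hk, ← zpow_natCast, ← zpow_mul, mul_comm, zpow_mul, zpow_natCast, heq, one_zpow]
    rw [pow_one]
    exact Subtype.ext (by rw [Subgroup.coe_pow]; exact hgq)
  have hmod := hH.card_modEq_card_fixedPoints ↥M
  have hfix : MulAction.fixedPoints H ↥M = {(1 : ↥M)} := by
    ext m
    simp only [MulAction.mem_fixedPoints, Set.mem_singleton_iff]
    constructor
    · intro h
      have he : e • m = m := h ⟨e, Subgroup.mem_zpowers e⟩
      have he' : e m = m := he
      have hco : y * (m : G) * y⁻¹ = m := by rw [← e_apply m, he']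
      by_contra hm1
      exact hcon (m : G) m.2 (fun h1 => hm1 (Subtype.ext h1)) hco
    · rintro rfl
      intro g
      have h1 : e • (1 : ↥M) = 1 := Subtype.ext (by simp [e_apply])
      have hle : Subgroup.zpowers e ≤ MulAction.stabilizer (Equiv.Perm ↥M) (1 : ↥M) :=
        Subgroup.zpowers_le.mpr h1
      exact hle g.2
  rw [hfix] at hmod
  have hone : Nat.card ({(1 : ↥M)} : Set ↥M) = 1 := Nat.card_unique
  rw [hone] at hmod
  have hpos : 1 ≤ Nat.card ↥M := Nat.card_pos
  exact hM ((Nat.modEq_iff_dvd' hpos).mp hmod.symm)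

/-- Every nontrivial finite solvable group has a nontrivial normal `r`-subgroup
for some prime `r`. -/
lemma aux_abelian_normal (K : Type*) [Group K] [Finite K] [Group.IsSolvable K]
    (hK : Nontrivial K) :
    ∃ r : ℕ, r.Prime ∧ ∃ M : Subgroup K, M.Normal ∧ M ≠ ⊥ ∧ IsPGroup r M := by
  classical
  obtain ⟨n₀, hn₀⟩ := Group.IsSolvable.solvable (G := K)
  have hex : ∃ n, derivedSeries K n = ⊥ := ⟨n₀, hn₀⟩
  set n := Nat.find hex with hndef
  have hn : derivedSeries K n = ⊥ := Nat.find_spec hex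
  have hnpos : 0 < n := by
    rcases Nat.eq_zero_or_pos n with h | h
    · exfalso
      rw [h, derivedSeries_zero] at hn
      obtain ⟨a, b, hab⟩ := exists_pair_ne K
      exact hab (by
        have ha : a ∈ (⊥ : Subgroup K) := hn ▸ Subgroup.mem_top a
        have hb : b ∈ (⊥ : Subgroup K) := hn ▸ Subgroup.mem_top b
        rw [Subgroup.mem_bot] at ha hb
        rw [ha, hb])
    · exact h
  set A := derivedSeries K (n - 1) with hAdef
  have hA : A ≠ ⊥ := Nat.find_min hex (Nat.sub_lt hnpos one_pos)
  haveI hAnormal : A.Normal := derivedSeries_normal K (n - 1)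
  have hAA : ⁅A, A⁆ = ⊥ := by
    have h1 := derivedSeries_succ K (n - 1)
    rw [show n - 1 + 1 = n from by omega, hn] at h1
    exact h1.symm
  have hcomm : ∀ a b : K, a ∈ A → b ∈ A → Commute a b := by
    intro a b ha hb
    open scoped commutatorElement in
    have h1 : ⁅a, b⁆ ∈ ⁅A, A⁆ := Subgroup.commutator_mem_commutator ha hb
    rw [hAA, Subgroup.mem_bot] at h1
    exact commutatorElement_eq_one_iff_commute.mp h1
  haveI : Nontrivial ↥A := by
    rcases A.bot_or_nontrivial with h | h
    · exact absurd h hA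
    · exact h
  have hAcard : Nat.card ↥A ≠ 1 := by
    have := Finite.one_lt_card_iff_nontrivial.mpr (inferInstance : Nontrivial ↥A)
    omega
  obtain ⟨r, hr, hrA⟩ := Nat.exists_prime_and_dvd hAcard
  haveI : Fact r.Prime := ⟨hr⟩
  obtain ⟨x, hx⟩ := exists_prime_orderOf_dvd_card' (G := ↥A) r hrA
  set N := Nat.card K with hNdef
  have hN0 : N ≠ 0 := Nat.card_pos.ne'
  refine ⟨r, hr, ?_⟩
  set M : Subgroup K :=
    { carrier := {g | g ∈ A ∧ g ^ r ^ N = 1}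
      one_mem' := ⟨A.one_mem, one_pow _⟩
      mul_mem' := by
        rintro a b ⟨haA, ha⟩ ⟨hbA, hb⟩
        exact ⟨A.mul_mem haA hbA, by rw [(hcomm a b haA hbA).mul_pow, ha, hb, one_mul]⟩
      inv_mem' := by
        rintro a ⟨haA, ha⟩
        exact ⟨A.inv_mem haA, by rw [inv_pow, ha, inv_one]⟩ } with hMdef
  have hMmem : ∀ g : K, g ∈ M ↔ g ∈ A ∧ g ^ r ^ N = 1 := fun g => Iff.rfl
  have hMnormal : M.Normal := by
    constructor
    intro g hg k
    rw [hMmem] at hg ⊢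
    refine ⟨hAnormal.conj_mem g hg.1 k, ?_⟩
    have h1 : (MulAut.conj k) g ^ (r ^ N) = 1 := by rw [← map_pow, hg.2, map_one]
    simpa [MulAut.conj_apply] using h1
  have hMbot : M ≠ ⊥ := by
    intro hbot
    have hgord : orderOf (x : K) = r := by rw [Subgroup.orderOf_coe]; exact hx
    have hgM : (x : K) ∈ M := by
      rw [hMmem]
      refine ⟨x.2, ?_⟩
      rw [← orderOf_dvd_iff_pow_eq_one, hgord]
      exact dvd_pow_self r hN0
    rw [hbot, Subgroup.mem_bot] at hgM
    rw [hgM] at hgord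
    simp at hgord
    exact hr.ne_one hgord.symm
  refine ⟨M, hMnormal, hMbot, ?_⟩
  intro g
  exact ⟨N, Subtype.ext (by rw [Subgroup.coe_pow]; exact g.2.2)⟩

/-- A finite solvable group whose order is divisible by primes `p` and `q` (with bounded
multiplicities and suitable arithmetic conditions) has an element of order `p * q`. -/
lemma aux_main (p q : ℕ) (hp : p.Prime) (hq : q.Prime) (hne : p ≠ q) (a b : ℕ)
    (ha : ∀ j, 1 ≤ j → j ≤ a → ¬ q ∣ p ^ j - 1) (hb : ∀ j, 1 ≤ j → j ≤ b → ¬ p ∣ q ^ j - 1) :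
    ∀ (n : ℕ) (K : Type u) [Group K] [Finite K] [Group.IsSolvable K], Nat.card K = n →
      p ∣ Nat.card K → q ∣ Nat.card K → ¬ p ^ (a + 1) ∣ Nat.card K →
      ¬ q ^ (b + 1) ∣ Nat.card K → ∃ x : K, orderOf x = p * q := by
  intro n
  induction n using Nat.strong_induction_on with
  | _ n IH =>
  intro K _ _ _ hn hpK hqK hpa hqb
  haveI : Fact p.Prime := ⟨hp⟩
  haveI : Fact q.Prime := ⟨hq⟩
  have hco : Nat.Coprime p q := (Nat.coprime_primes hp hq).mpr hne
  haveI : Nontrivial K := by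
    refine Finite.one_lt_card_iff_nontrivial.mp ?_
    exact lt_of_lt_of_le hp.one_lt (Nat.le_of_dvd Nat.card_pos hpK)
  obtain ⟨r, hr, M, hMn, hMbot, hMp⟩ := aux_abelian_normal K inferInstance
  haveI : Fact r.Prime := ⟨hr⟩
  haveI := hMn
  obtain ⟨j, hj⟩ := IsPGroup.iff_card.mp hMp
  have hMdvd : Nat.card ↥M ∣ Nat.card K := Subgroup.card_subgroup_dvd_card M
  have hj1 : 1 ≤ j := by
    by_contra h
    push_neg at h
    interval_cases j
    rw [pow_zero] at hj
    exact hMbot (Subgroup.card_eq_one.mp hj)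
  rcases eq_or_ne r p with hEq | hrp
  · -- M is a p-group; find a q-element with a nontrivial fixed point in M
    have hEq' := hEq.symm
    subst hEq'
    have hja : j ≤ a := by
      by_contra hcon
      push_neg at hcon
      exact hpa ((pow_dvd_pow p hcon).trans (hj ▸ hMdvd))
    obtain ⟨y, hy⟩ := exists_prime_orderOf_dvd_card' (G := K) q hqK
    have hynorm : y ∈ (Subgroup.normalizer (M : Set K)) := by
      rw [Subgroup.normalizer_eq_top_iff.mpr hMn]
      exact Subgroup.mem_top y
    obtain ⟨m, hmM, hm1, hmfix⟩ := aux_fixed hq hy hynorm (by rw [hj]; exact ha j hj1 hja)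
    have hcommym : Commute y m := by
      have h1 : y * m = m * y := by
        conv_rhs => rw [← hmfix]
        group
      exact h1
    have hmdvd : orderOf m ∣ p ^ j := by
      rw [← hj, ← Subgroup.orderOf_mk m hmM]
      exact orderOf_dvd_natCard _
    obtain ⟨i, hile, hio⟩ := (Nat.dvd_prime_pow hp).mp hmdvd
    have hi1 : 1 ≤ i := by
      by_contra h
      push_neg at h
      interval_cases i
      rw [pow_zero, orderOf_eq_one_iff] at hio
      exact hm1 hio
    set m' := m ^ p ^ (i - 1) with hm'def
    have hm'p : m' ^ p = 1 := by
      rw [hm'def, ← pow_mul, ← pow_succ, show i - 1 + 1 = i from by omega, ← hio,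
        pow_orderOf_eq_one]
    have hm'ne : m' ≠ 1 := by
      intro h
      have h2 : orderOf m ∣ p ^ (i - 1) := orderOf_dvd_iff_pow_eq_one.mpr h
      rw [hio] at h2
      have := (Nat.pow_dvd_pow_iff_le_right hp.one_lt).mp h2
      omega
    have hm'o : orderOf m' = p := by
      have hdvd : orderOf m' ∣ p := orderOf_dvd_iff_pow_eq_one.mpr hm'p
      rcases hp.eq_one_or_self_of_dvd _ hdvd with h | h
      · exact absurd (orderOf_eq_one_iff.mp h) hm'ne
      · exact h
    have hcomm' : Commute y m' := hcommym.pow_right _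
    refine ⟨m' * y, ?_⟩
    rw [hcomm'.symm.orderOf_mul_eq_mul_orderOf_of_coprime (by rw [hm'o, hy]; exact hco),
      hm'o, hy]
  rcases eq_or_ne r q with hEq | hrq
  · -- M is a q-group; find a p-element with a nontrivial fixed point in M
    have hEq' := hEq.symm
    subst hEq'
    have hjb : j ≤ b := by
      by_contra hcon
      push_neg at hcon
      exact hqb ((pow_dvd_pow q hcon).trans (hj ▸ hMdvd))
    obtain ⟨y, hy⟩ := exists_prime_orderOf_dvd_card' (G := K) p hpK
    have hynorm : y ∈ (Subgroup.normalizer (M : Set K)) := by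
      rw [Subgroup.normalizer_eq_top_iff.mpr hMn]
      exact Subgroup.mem_top y
    obtain ⟨m, hmM, hm1, hmfix⟩ := aux_fixed hp hy hynorm (by rw [hj]; exact hb j hj1 hjb)
    have hcommym : Commute y m := by
      have h1 : y * m = m * y := by
        conv_rhs => rw [← hmfix]
        group
      exact h1
    have hmdvd : orderOf m ∣ q ^ j := by
      rw [← hj, ← Subgroup.orderOf_mk m hmM]
      exact orderOf_dvd_natCard _
    obtain ⟨i, hile, hio⟩ := (Nat.dvd_prime_pow hq).mp hmdvd
    have hi1 : 1 ≤ i := by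
      by_contra h
      push_neg at h
      interval_cases i
      rw [pow_zero, orderOf_eq_one_iff] at hio
      exact hm1 hio
    set m' := m ^ q ^ (i - 1) with hm'def
    have hm'p : m' ^ q = 1 := by
      rw [hm'def, ← pow_mul, ← pow_succ, show i - 1 + 1 = i from by omega, ← hio,
        pow_orderOf_eq_one]
    have hm'ne : m' ≠ 1 := by
      intro h
      have h2 : orderOf m ∣ q ^ (i - 1) := orderOf_dvd_iff_pow_eq_one.mpr h
      rw [hio] at h2
      have := (Nat.pow_dvd_pow_iff_le_right hq.one_lt).mp h2
      omega
    have hm'o : orderOf m' = q := by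
      have hdvd : orderOf m' ∣ q := orderOf_dvd_iff_pow_eq_one.mpr hm'p
      rcases hq.eq_one_or_self_of_dvd _ hdvd with h | h
      · exact absurd (orderOf_eq_one_iff.mp h) hm'ne
      · exact h
    have hcomm' : Commute y m' := hcommym.pow_right _
    refine ⟨y * m', ?_⟩
    rw [hcomm'.orderOf_mul_eq_mul_orderOf_of_coprime (by rw [hm'o, hy]; exact hco),
      hm'o, hy]
  · -- r ∉ {p, q}: pass to the quotient K ⧸ M
    have hcardeq : Nat.card K = Nat.card (K ⧸ M) * Nat.card ↥M :=
      Subgroup.card_eq_card_quotient_mul_card_subgroup M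
    have hMgt : 1 < Nat.card ↥M := by
      rw [hj]
      exact Nat.one_lt_pow (by omega) hr.one_lt
    have hQpos : 0 < Nat.card (K ⧸ M) := Nat.card_pos
    have hQlt : Nat.card (K ⧸ M) < Nat.card K := by
      rw [hcardeq]
      exact (Nat.lt_mul_iff_one_lt_right hQpos).mpr hMgt
    have hpM : ¬ p ∣ Nat.card ↥M := by
      rw [hj]
      intro h
      exact hrp ((Nat.prime_dvd_prime_iff_eq hp hr).mp (hp.dvd_of_dvd_pow h)).symm
    have hqM : ¬ q ∣ Nat.card ↥M := by
      rw [hj]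
      intro h
      exact hrq ((Nat.prime_dvd_prime_iff_eq hq hr).mp (hq.dvd_of_dvd_pow h)).symm
    have hQdvd : Nat.card (K ⧸ M) ∣ Nat.card K := Dvd.intro _ hcardeq.symm
    have hpQ : p ∣ Nat.card (K ⧸ M) := by
      have h1 := hpK
      rw [hcardeq] at h1
      exact ((Nat.Prime.coprime_iff_not_dvd hp).mpr hpM).dvd_of_dvd_mul_right h1
    have hqQ : q ∣ Nat.card (K ⧸ M) := by
      have h1 := hqK
      rw [hcardeq] at h1
      exact ((Nat.Prime.coprime_iff_not_dvd hq).mpr hqM).dvd_of_dvd_mul_right h1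
    obtain ⟨xb, hxb⟩ := IH (Nat.card (K ⧸ M)) (hn ▸ hQlt) (K ⧸ M) rfl hpQ hqQ
      (fun h => hpa (h.trans hQdvd)) (fun h => hqb (h.trans hQdvd))
    obtain ⟨x, hx⟩ := QuotientGroup.mk'_surjective M xb
    have hdvd : p * q ∣ orderOf x := by
      rw [← hxb, ← hx]
      exact orderOf_map_dvd (QuotientGroup.mk' M) x
    have hx0 : orderOf x ≠ 0 := (orderOf_pos x).ne'
    exact ⟨x ^ (orderOf x / (p * q)), orderOf_pow_orderOf_div hx0 hdvd⟩

/-- If `K` is a normal solvable subgroup of a finite group `G` with `p ∣ |K|`, `p² ∤ |G|`,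
and suitable arithmetic conditions, then `G` has an element of order `p * q`. -/
lemma aux_edge [Finite G] (K : Subgroup G) (hKn : K.Normal)
    (hKs : IsSolvable ↥K) (p q b : ℕ) (hp : p.Prime) (hq : q.Prime) (hne : p ≠ q)
    (hpK : p ∣ Nat.card ↥K) (hp2 : ¬ p ^ 2 ∣ Nat.card G) (hqG : q ∣ Nat.card G)
    (hqb : ¬ q ^ (b + 1) ∣ Nat.card G) (h1 : ¬ q ∣ p - 1)
    (h2 : ∀ j, 1 ≤ j → j ≤ b → ¬ p ∣ q ^ j - 1) :
    ∃ g : G, orderOf g = p * q := by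
  haveI := hKn
  haveI : Group.IsSolvable ↥K := hKs
  have hco : Nat.Coprime p q := (Nat.coprime_primes hp hq).mpr hne
  have hKdvd : Nat.card ↥K ∣ Nat.card G := Subgroup.card_subgroup_dvd_card K
  by_cases hqK : q ∣ Nat.card ↥K
  · obtain ⟨x, hx⟩ := aux_main p q hp hq hne 1 b
      (by intro j hj1 hj2; interval_cases j; simpa using h1) h2 (Nat.card ↥K) ↥K rfl hpK hqK
      (fun h => hp2 ((by simpa using h : p ^ 2 ∣ Nat.card ↥K).trans hKdvd))
      (fun h => hqb (h.trans hKdvd))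
    exact ⟨(x : G), by rw [Subgroup.orderOf_coe]; exact hx⟩
  · haveI : Fact p.Prime := ⟨hp⟩
    haveI : Fact q.Prime := ⟨hq⟩
    obtain ⟨P⟩ : Nonempty (Sylow p ↥K) := inferInstance
    have htop := Sylow.normalizer_sup_eq_top (G := G) (N := K) P
    set Q : Subgroup G := Subgroup.map K.subtype ↑P with hQdef
    have hsurj : Function.Surjective ((QuotientGroup.mk' K).comp (Subgroup.normalizer (Q : Set G)).subtype) := by
      intro z
      obtain ⟨g, rfl⟩ := QuotientGroup.mk'_surjective K z
      have hg : g ∈ (Subgroup.normalizer (Q : Set G)) ⊔ K := by rw [htop]; exact Subgroup.mem_top g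
      rw [← SetLike.mem_coe, Subgroup.mul_normal] at hg
      obtain ⟨h, hh, k, hk, rfl⟩ := hg
      refine ⟨⟨h, hh⟩, ?_⟩
      show QuotientGroup.mk' K h = QuotientGroup.mk' K (h * k)
      exact (QuotientGroup.mk'_eq_mk' (N := K)).mpr ⟨k, hk, rfl⟩
    have hqH : q ∣ Nat.card ↥(Subgroup.normalizer (Q : Set G)) := by
      have hdvd2 : Nat.card (G ⧸ K) ∣ Nat.card ↥(Subgroup.normalizer (Q : Set G)) :=
        Subgroup.card_dvd_of_surjective _ hsurj
      have hGeq : Nat.card G = Nat.card (G ⧸ K) * Nat.card ↥K :=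
        Subgroup.card_eq_card_quotient_mul_card_subgroup K
      have h3 : q ∣ Nat.card (G ⧸ K) * Nat.card ↥K := hGeq ▸ hqG
      rcases (Nat.Prime.dvd_mul hq).mp h3 with h | h
      · exact h.trans hdvd2
      · exact absurd h hqK
    obtain ⟨y₀, hy₀⟩ := exists_prime_orderOf_dvd_card' (G := ↥(Subgroup.normalizer (Q : Set G))) q hqH
    have hy : orderOf (y₀ : G) = q := by rw [Subgroup.orderOf_coe]; exact hy₀
    have hynorm : (y₀ : G) ∈ (Subgroup.normalizer (Q : Set G)) := SetLike.coe_mem y₀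
    have hK0 : Nat.card ↥K ≠ 0 := Nat.card_pos.ne'
    have hfact1 : (Nat.card ↥K).factorization p = 1 := by
      have hge : 1 ≤ (Nat.card ↥K).factorization p :=
        (Nat.Prime.pow_dvd_iff_le_factorization hp hK0).mp (by simpa using hpK)
      have hlt : ¬ 2 ≤ (Nat.card ↥K).factorization p := by
        intro h
        exact hp2 (((Nat.Prime.pow_dvd_iff_le_factorization hp hK0).mpr h).trans hKdvd)
      omega
    have hPcard : Nat.card ↥(P : Subgroup ↥K) = p := by
      rw [Sylow.card_eq_multiplicity, hfact1, pow_one]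
    have hQcard : Nat.card ↥Q = p := by
      rw [← hPcard]
      exact Nat.card_congr
        ((Subgroup.equivMapOfInjective (P : Subgroup ↥K) K.subtype
          (Subgroup.subtype_injective K)).symm.toEquiv)
    obtain ⟨m, hmQ, hm1, hmfix⟩ := aux_fixed hq hy hynorm (by rw [hQcard]; exact h1)
    have hcommym : Commute (y₀ : G) m := by
      have h3 : (y₀ : G) * m = m * y₀ := by
        conv_rhs => rw [← hmfix]
        group
      exact h3
    have hmo : orderOf m = p := by
      have hdvd : orderOf m ∣ p := by
        rw [← hQcard, ← Subgroup.orderOf_mk m hmQ]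
        exact orderOf_dvd_natCard _
      rcases hp.eq_one_or_self_of_dvd _ hdvd with h | h
      · exact absurd (orderOf_eq_one_iff.mp h) hm1
      · exact h
    refine ⟨m * (y₀ : G), ?_⟩
    rw [hcommym.symm.orderOf_mul_eq_mul_orderOf_of_coprime (by rw [hmo, hy]; exact hco),
      hmo, hy]

end Aux

theorem solvable_normal_pi_subset_L3_11 (G : Type*) [Group G] [Finite G]
    (hcard : Nat.card G = 2 ^ 4 * 3 * 5 ^ 2 * 7 * 11 ^ 3 * 19)
    (hdeg2 : primeGraphDeg G 2 = 3) (hdeg3 : primeGraphDeg G 3 = 2)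
    (hdeg5 : primeGraphDeg G 5 = 3) (hdeg7 : primeGraphDeg G 7 = 1)
    (hdeg11 : primeGraphDeg G 11 = 2) (hdeg19 : primeGraphDeg G 19 = 1) :
    ∀ K : Subgroup G, K.Normal → IsSolvable K →
      (Nat.card K).primeFactors ⊆ {2, 3, 5, 11} ∧
        ¬ 7 ∣ Nat.card K ∧ ¬ 19 ∣ Nat.card K := by
  classical
  intro K hKn hKs
  have hG0 : Nat.card G ≠ 0 := Nat.card_pos.ne'
  have hKdvd : Nat.card ↥K ∣ Nat.card G := Subgroup.card_subgroup_dvd_card K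
  have hfac : ∀ s : ℕ, s.Prime → s ∣ Nat.card G →
      s = 2 ∨ s = 3 ∨ s = 5 ∨ s = 7 ∨ s = 11 ∨ s = 19 := by
    intro s hs hsd
    rw [hcard] at hsd
    rcases hs.dvd_mul.mp hsd with h | h
    · rcases hs.dvd_mul.mp h with h | h
      · rcases hs.dvd_mul.mp h with h | h
        · rcases hs.dvd_mul.mp h with h | h
          · rcases hs.dvd_mul.mp h with h | h
            · exact Or.inl
                ((Nat.prime_dvd_prime_iff_eq hs (by norm_num)).mp (hs.dvd_of_dvd_pow h))
            · exact Or.inr (Or.inl ((Nat.prime_dvd_prime_iff_eq hs (by norm_num)).mp h))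
          · exact Or.inr (Or.inr (Or.inl
              ((Nat.prime_dvd_prime_iff_eq hs (by norm_num)).mp (hs.dvd_of_dvd_pow h))))
        · exact Or.inr (Or.inr (Or.inr (Or.inl
            ((Nat.prime_dvd_prime_iff_eq hs (by norm_num)).mp h))))
      · exact Or.inr (Or.inr (Or.inr (Or.inr (Or.inl
          ((Nat.prime_dvd_prime_iff_eq hs (by norm_num)).mp (hs.dvd_of_dvd_pow h))))))
    · exact Or.inr (Or.inr (Or.inr (Or.inr (Or.inr
        ((Nat.prime_dvd_prime_iff_eq hs (by norm_num)).mp h)))))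
  have hadj : ∀ p' q' : ℕ, p'.Prime → q'.Prime → p' ≠ q' → p' ∣ Nat.card G →
      q' ∣ Nat.card G → (∃ g : G, orderOf g = p' * q') →
      q' ∈ (Nat.card G).primeFactors.filter (fun r => primeGraphAdj G p' r) := by
    intro p' q' hp' hq' hne h1 h2 h3
    exact Finset.mem_filter.mpr ⟨Nat.mem_primeFactors.mpr ⟨hq', h2, hG0⟩,
      ⟨hne, hp', hq', h1, h2, h3⟩⟩
  have h19 : ¬ 19 ∣ Nat.card ↥K := by
    intro h19d
    have h19G : (19 : ℕ) ∣ Nat.card G := h19d.trans hKdvd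
    have e5 : ∃ g : G, orderOf g = 19 * 5 :=
      aux_edge K hKn hKs 19 5 2 (by norm_num) (by norm_num) (by norm_num) h19d
        (by rw [hcard]; norm_num) (by rw [hcard]; norm_num) (by rw [hcard]; norm_num)
        (by norm_num) (by intro j hj1 hj2; interval_cases j <;> norm_num)
    have e7 : ∃ g : G, orderOf g = 19 * 7 :=
      aux_edge K hKn hKs 19 7 1 (by norm_num) (by norm_num) (by norm_num) h19d
        (by rw [hcard]; norm_num) (by rw [hcard]; norm_num) (by rw [hcard]; norm_num)
        (by norm_num) (by intro j hj1 hj2; interval_cases j <;> norm_num)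
    have hm5 := hadj 19 5 (by norm_num) (by norm_num) (by norm_num) h19G
      (by rw [hcard]; norm_num) e5
    have hm7 := hadj 19 7 (by norm_num) (by norm_num) (by norm_num) h19G
      (by rw [hcard]; norm_num) e7
    have hlt : 1 < ((Nat.card G).primeFactors.filter (fun r => primeGraphAdj G 19 r)).card :=
      Finset.one_lt_card.mpr ⟨5, hm5, 7, hm7, by norm_num⟩
    unfold primeGraphDeg at hdeg19
    rw [hdeg19] at hlt
    exact lt_irrefl 1 hlt
  have h7 : ¬ 7 ∣ Nat.card ↥K := by
    intro h7d
    have h7G : (7 : ℕ) ∣ Nat.card G := h7d.trans hKdvd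
    have e5 : ∃ g : G, orderOf g = 7 * 5 :=
      aux_edge K hKn hKs 7 5 2 (by norm_num) (by norm_num) (by norm_num) h7d
        (by rw [hcard]; norm_num) (by rw [hcard]; norm_num) (by rw [hcard]; norm_num)
        (by norm_num) (by intro j hj1 hj2; interval_cases j <;> norm_num)
    have e19 : ∃ g : G, orderOf g = 7 * 19 :=
      aux_edge K hKn hKs 7 19 1 (by norm_num) (by norm_num) (by norm_num) h7d
        (by rw [hcard]; norm_num) (by rw [hcard]; norm_num) (by rw [hcard]; norm_num)
        (by norm_num) (by intro j hj1 hj2; interval_cases j <;> norm_num)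
    have hm5 := hadj 7 5 (by norm_num) (by norm_num) (by norm_num) h7G
      (by rw [hcard]; norm_num) e5
    have hm19 := hadj 7 19 (by norm_num) (by norm_num) (by norm_num) h7G
      (by rw [hcard]; norm_num) e19
    have hlt : 1 < ((Nat.card G).primeFactors.filter (fun r => primeGraphAdj G 7 r)).card :=
      Finset.one_lt_card.mpr ⟨5, hm5, 19, hm19, by norm_num⟩
    unfold primeGraphDeg at hdeg7
    rw [hdeg7] at hlt
    exact lt_irrefl 1 hlt
  refine ⟨?_, h7, h19⟩
  intro s hs
  have hsp := Nat.prime_of_mem_primeFactors hs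
  have hsd := Nat.dvd_of_mem_primeFactors hs
  rcases hfac s hsp (hsd.trans hKdvd) with rfl | rfl | rfl | rfl | rfl | rfl
  · simp
  · simp
  · simp
  · exact absurd hsd h7
  · simp
  · exact absurd hsd h19
end

section
/- Let G be a finite group with |G| = 2⁹·3¹²·5²·7·13·41·73 and degree pattern D(G) = (3,2,3,2,2,2,2), i.e., deg_G(2)=3, deg_G(3)=2, deg_G(5)=3, deg_G(7)=2, deg_G(13)=2, deg_G(41)=2, deg_G(73)=2. Then for every solvable normal subgroup K of G, the prime 73 does not divide |K|. -/
open scoped MatrixGroups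

section AuxLemmas

open Subgroup Pointwise

universe u

lemma aux_index_dvd_card_of_sup_eq_top {G : Type*} [Group G] [Finite G] {A B : Subgroup G}
    [B.Normal] (h : A ⊔ B = ⊤) : A.index ∣ Nat.card B := by
  have h1 : B.index = (B.subgroupOf A).index := by
    rw [← Subgroup.relIndex_top_right, ← h, Subgroup.relIndex_sup_right]; rfl
  have h2 : Nat.card (B.subgroupOf A) * (B.subgroupOf A).index = Nat.card A :=
    Subgroup.card_mul_index _
  have h3 : Nat.card A * A.index = Nat.card G := Subgroup.card_mul_index _
  have h4 : Nat.card B * B.index = Nat.card G := Subgroup.card_mul_index _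
  have h5 : (B.subgroupOf A).index ≠ 0 := Subgroup.index_ne_zero_of_finite
  refine ⟨Nat.card (B.subgroupOf A), ?_⟩
  have key : Nat.card B * (B.subgroupOf A).index =
      (A.index * Nat.card (B.subgroupOf A)) * (B.subgroupOf A).index := by
    calc Nat.card B * (B.subgroupOf A).index = Nat.card B * B.index := by rw [h1]
    _ = Nat.card A * A.index := by rw [h4, h3]
    _ = (Nat.card (B.subgroupOf A) * (B.subgroupOf A).index) * A.index := by rw [h2]
    _ = _ := by ring
  exact Nat.eq_of_mul_eq_mul_right (Nat.pos_of_ne_zero h5) key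



lemma aux_exists_normal_pSubgroup (H : Type*) [Group H] [Finite H] [Group.IsSolvable H]
    [hH : Nontrivial H] :
    ∃ (q : ℕ) (N : Subgroup H), q.Prime ∧ N.Normal ∧ N ≠ ⊥ ∧ IsPGroup q N := by
  classical
  have hsolv : ∃ n, derivedSeries H n = ⊥ := Group.IsSolvable.solvable
  set m := Nat.find hsolv with hm_def
  have hm : derivedSeries H m = ⊥ := Nat.find_spec hsolv
  have hm0 : m ≠ 0 := by
    intro h0
    rw [h0, derivedSeries_zero] at hm
    obtain ⟨x, y, hxy⟩ := hH
    have hx : x = 1 := (Subgroup.eq_bot_iff_forall _).mp hm x (Subgroup.mem_top _)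
    have hy : y = 1 := (Subgroup.eq_bot_iff_forall _).mp hm y (Subgroup.mem_top _)
    exact hxy (hx.trans hy.symm)
  set A : Subgroup H := derivedSeries H (m - 1) with hA_def
  have hA_ne : A ≠ ⊥ := Nat.find_min hsolv (Nat.sub_lt (Nat.pos_of_ne_zero hm0) one_pos)
  haveI hA_norm : A.Normal := derivedSeries_normal H _
  have hcomm : ∀ x y : ↥A, x * y = y * x := by
    have hbot : ⁅A, A⁆ = ⊥ := by
      have h1 : derivedSeries H (m - 1 + 1) = ⊥ := by
        rwa [Nat.sub_add_cancel (Nat.one_le_iff_ne_zero.mpr hm0)]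
      rwa [derivedSeries_succ] at h1
    have hc := Subgroup.commutator_eq_bot_iff_le_centralizer.mp hbot
    intro x y
    have h2 := (Subgroup.mem_centralizer_iff.mp (hc y.2)) x x.2
    exact Subtype.ext h2
  have hA_nontriv : Nontrivial ↥A := by
    rwa [Subgroup.nontrivial_iff_ne_bot]
  have hcard : 1 < Nat.card ↥A := Finite.one_lt_card
  set q := (Nat.card ↥A).minFac with hq_def
  have hq : q.Prime := Nat.minFac_prime (by omega)
  haveI : Fact q.Prime := ⟨hq⟩
  have hq_dvd : q ∣ Nat.card ↥A := Nat.minFac_dvd _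
  let S : Sylow q ↥A := default
  have hS_norm : (S : Subgroup ↥A).Normal := by
    constructor
    intro n hn g
    have h3 : g * n * g⁻¹ = n := by rw [hcomm g n]; group
    rwa [h3]
  refine ⟨q, Subgroup.map A.subtype S, hq, ?_, ?_, ?_⟩
  · constructor
    intro x hx g
    obtain ⟨y, hyS, rfl⟩ := hx
    have hxA : (y : H) ∈ A := y.2
    have hconjA : g * (y : H) * g⁻¹ ∈ A := hA_norm.conj_mem _ hxA g
    set z : ↥A := ⟨g * (y : H) * g⁻¹, hconjA⟩ with hz_def
    obtain ⟨k, hk⟩ := S.2 ⟨y, hyS⟩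
    have hyk : y ^ (q ^ k) = (1 : ↥A) := by
      have h4 := congrArg Subtype.val hk
      simpa using h4
    have hykH : (y : H) ^ (q ^ k) = 1 := by
      have h5 := congrArg Subtype.val hyk
      simpa using h5
    have hzk : z ^ (q ^ k) = 1 := by
      apply Subtype.ext
      show (g * (y : H) * g⁻¹) ^ (q ^ k) = ((1 : ↥A) : H)
      rw [conj_pow, hykH]
      simp
    have hzP : IsPGroup q (Subgroup.zpowers z) := by
      refine fun u => ⟨k, ?_⟩
      obtain ⟨i, hi⟩ := u.2
      have h1 : (u : ↥A) ^ (q ^ k) = 1 := by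
        rw [← hi]
        have h6 : (z ^ i) ^ ((q ^ k : ℕ) : ℤ) = (z ^ ((q ^ k : ℕ) : ℤ)) ^ i := by
          rw [← zpow_mul, mul_comm, zpow_mul]
        rw [← zpow_natCast (z ^ i) (q ^ k), h6, zpow_natCast, hzk, one_zpow]
      exact Subtype.ext (by simpa using h1)
    obtain ⟨Q, hQ⟩ := hzP.exists_le_sylow
    haveI : Unique (Sylow q ↥A) := S.unique_of_normal hS_norm
    have hQS : Q = S := Subsingleton.elim _ _
    have hzS : z ∈ (S : Subgroup ↥A) := by
      rw [← hQS]
      exact hQ (Subgroup.mem_zpowers z)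
    exact ⟨z, hzS, rfl⟩
  · intro h
    have hSbot : (S : Subgroup ↥A) ≠ ⊥ := S.ne_bot_of_dvd_card hq_dvd
    exact hSbot ((Subgroup.map_eq_bot_iff_of_injective _ A.subtype_injective).mp h)
  · exact S.2.map _

lemma aux_conj_commute {G : Type*} [Group G] {p r : ℕ} (hp : p.Prime)
    (hco : Nat.Coprime r (p - 1)) {x g : G} (hx : orderOf x = p) (hg : orderOf g = r)
    (k : ℤ) (h : g * x * g⁻¹ = x ^ k) : Commute g x := by
  haveI : Fact p.Prime := ⟨hp⟩
  have hiter : ∀ n : ℕ, g ^ n * x * (g ^ n)⁻¹ = x ^ (k ^ n) := by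
    intro n
    induction n with
    | zero => simp
    | succ n ih =>
      have : g ^ (n + 1) * x * (g ^ (n + 1))⁻¹ = g * (g ^ n * x * (g ^ n)⁻¹) * g⁻¹ := by
        rw [pow_succ']; group
      rw [this, ih, ← conj_zpow, h, ← zpow_mul, pow_succ']
  have hr : g ^ r = 1 := by rw [← hg]; exact pow_orderOf_eq_one g
  have hxr : x = x ^ (k ^ r) := by
    have := hiter r
    rwa [hr, one_mul, inv_one, mul_one] at this
  -- k is nonzero mod p
  have hk0 : ((k : ZMod p) : ZMod p) ≠ 0 := by
    intro h0
    have hdvd : (p : ℤ) ∣ k := by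
      rwa [ZMod.intCast_zmod_eq_zero_iff_dvd] at h0
    have hxk : x ^ k = 1 := by
      rw [← orderOf_dvd_iff_zpow_eq_one, hx]; exact hdvd
    have hx1 : x = 1 := by
      have : g * x * g⁻¹ = 1 := by rw [h, hxk]
      have h2 : g * x = g := by
        have := congrArg (· * g) this
        simpa [mul_assoc] using this
      have h2' : g * x = g * 1 := by simpa using h2
      exact mul_left_cancel h2'
    rw [hx1, orderOf_one] at hx
    exact hp.one_lt.ne' hx.symm
  obtain ⟨κ, hκ⟩ := (Ne.isUnit hk0 : IsUnit ((k : ZMod p)))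
  -- κ ^ r = 1
  have hκr : κ ^ r = 1 := by
    have hdvd : (p : ℤ) ∣ k ^ r - 1 := by
      rw [← hx, orderOf_dvd_iff_zpow_eq_one, zpow_sub, zpow_one]
      rw [← hxr]
      simp
    have : ((k ^ r - 1 : ℤ) : ZMod p) = 0 := by
      rwa [ZMod.intCast_zmod_eq_zero_iff_dvd]
    have h3 : ((k : ZMod p)) ^ r = 1 := by
      push_cast at this
      linear_combination this
    ext
    push_cast
    rw [hκ]
    exact h3
  have hord1 : orderOf κ ∣ r := orderOf_dvd_of_pow_eq_one hκr
  have hord2 : orderOf κ ∣ p - 1 := by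
    have := orderOf_dvd_card (x := κ)
    rwa [ZMod.card_units_eq_totient, Nat.totient_prime hp] at this
  have hord : orderOf κ = 1 := Nat.eq_one_of_dvd_coprimes hco hord1 hord2
  have hκ1 : κ = 1 := orderOf_eq_one_iff.mp hord
  have hk1 : ((k : ZMod p)) = 1 := by rw [← hκ, hκ1]; simp
  have hdvd1 : (p : ℤ) ∣ k - 1 := by
    have : ((k - 1 : ℤ) : ZMod p) = 0 := by push_cast [hk1]; ring
    rwa [ZMod.intCast_zmod_eq_zero_iff_dvd] at this
  have hxk : x ^ k = x := by
    have h4 : x ^ (k - 1) = 1 := by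
      rw [← orderOf_dvd_iff_zpow_eq_one, hx]; exact hdvd1
    calc x ^ k = x ^ (k - 1) * x ^ (1 : ℤ) := by rw [← zpow_add]; ring_nf
    _ = x := by rw [h4, one_mul, zpow_one]
  have : g * x * g⁻¹ = x := by rw [h, hxk]
  have h5 : g * x = x * g := by
    have := congrArg (· * g) this
    simpa [mul_assoc] using this
  exact h5

lemma aux_hall (p : ℕ) [Fact p.Prime] :
    ∀ n : ℕ, ∀ (H : Type u) [Group H] [Finite H] [Group.IsSolvable H], Nat.card H ≤ n →
    ∀ r : ℕ, r.Prime → r ∣ Nat.card (Sylow p H) →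
    ∃ a : ℕ, 0 < a ∧ r ^ a ∣ Nat.card H ∧ r ^ a % p = 1 := by
  intro n
  induction n with
  | zero =>
    intro H _ _ _ hcard
    exact absurd (Nat.card_pos.trans_le hcard) (lt_irrefl 0)
  | succ n IH =>
    intro H _ _ _ hcard r hr hdvd
    classical
    -- r divides card H
    let P : Sylow p H := default
    have hrH : r ∣ Nat.card H :=
      hdvd.trans ((Sylow.card_dvd_index P).trans (Subgroup.index_dvd_card _))
    haveI hnt : Nontrivial H := by
      have h1 : Nat.card H ≠ 1 := by
        intro h1
        rw [h1] at hrH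
        exact hr.one_lt.ne' (Nat.dvd_one.mp hrH)
      have h2 : 0 < Nat.card H := Nat.card_pos
      exact Finite.one_lt_card_iff_nontrivial.mp (by omega)
    obtain ⟨q, N, hq, hNnorm, hNbot, hNp⟩ := aux_exists_normal_pSubgroup H
    haveI := hNnorm
    haveI : Fact q.Prime := ⟨hq⟩
    set PN : Subgroup H := (P : Subgroup H) ⊔ N with hPN_def
    set M : Subgroup H := (Subgroup.normalizer (PN : Set _)) with hM_def
    set W : Subgroup H := (Subgroup.normalizer ((P : Subgroup H) : Set _)) with hW_def
    have hPle : (P : Subgroup H) ≤ PN := le_sup_left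
    have hNle : N ≤ PN := le_sup_right
    have hPNM : PN ≤ M := Subgroup.le_normalizer
    have hWM : W ≤ M := by
      intro g hgW
      have hginv : g⁻¹ ∈ W := inv_mem hgW
      rw [hW_def, Subgroup.mem_normalizer_iff] at hgW hginv
      rw [hM_def, Subgroup.mem_normalizer_iff]
      have key : ∀ x : H, (∀ h : H, h ∈ (P : Subgroup H) ↔ x * h * x⁻¹ ∈ (P : Subgroup H)) →
          ∀ h ∈ PN, x * h * x⁻¹ ∈ PN := by
        intro x hx h hh
        have hh' : h ∈ ((P : Subgroup H) : Set H) * (N : Set H) := by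
          rw [← Subgroup.mul_normal]; exact hh
        obtain ⟨a, ha, b, hb, rfl⟩ := hh'
        have hsplit : x * (a * b) * x⁻¹ = (x * a * x⁻¹) * (x * b * x⁻¹) := by group
        rw [hsplit]
        exact Subgroup.mul_mem _ (hPle ((hx a).mp ha)) (hNle (hNnorm.conj_mem b hb x))
      intro h
      constructor
      · intro hh; exact key g hgW h hh
      · intro hh
        have h2 := key g⁻¹ hginv _ hh
        simpa [mul_assoc] using h2
    have hsplit : W.relIndex M * M.index = W.index := Subgroup.relIndex_mul_index hWM
    have hWindex : Nat.card (Sylow p H) = W.index := P.card_eq_index_normalizer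
    have hr_cases : r ∣ W.relIndex M ∨ r ∣ M.index := by
      rw [hWindex, ← hsplit] at hdvd
      exact hr.dvd_mul.mp hdvd
    rcases hr_cases with hcase | hcase
    · -- local case: r divides the number of Sylows of M = normalizer of PN
      set t := W.relIndex M with ht_def
      have hPM : (P : Subgroup H) ≤ M := hPle.trans hPNM
      let P'' : Sylow p ↥M := P.subtype hPM
      have hP''coe : (P'' : Subgroup ↥M) = (P : Subgroup H).subgroupOf M := P.coe_subtype hPM
      have hnorm_eq : W.subgroupOf M = (Subgroup.normalizer (((P : Subgroup H).subgroupOf M : Subgroup ↥M) : Set ↥M)) :=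
        Subgroup.subgroupOf_normalizer_eq hPM
      have ht_count : t = Nat.card (Sylow p ↥M) := by
        rw [Sylow.card_eq_index_normalizer P'']
        show t = (Subgroup.normalizer ((P'' : Subgroup ↥M) : Set ↥M)).index
        rw [hP''coe, ← hnorm_eq]
        rfl
      have ht_mod : t % p = 1 := by
        have := card_sylow_modEq_one p ↥M
        rw [← ht_count] at this
        have h1 : t % p = 1 % p := this
        rwa [Nat.mod_eq_of_lt (Fact.out : p.Prime).one_lt] at h1
      -- Frattini inside M
      set PN' : Subgroup ↥M := PN.subgroupOf M with hPN'_def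
      haveI : PN'.Normal := Subgroup.normal_in_normalizer
      have hP''PN' : (P'' : Subgroup ↥M) ≤ PN' := by
        rw [hP''coe, hPN'_def]
        exact Subgroup.comap_mono hPle
      have hfrattini : (Subgroup.normalizer ((P'' : Subgroup ↥M) : Set ↥M)) ⊔ PN' = ⊤ :=
        Sylow.normalizer_sup_eq_top' P'' hP''PN'
      have ht_dvd_PN' : t ∣ Nat.card PN' := by
        have h6 := aux_index_dvd_card_of_sup_eq_top hfrattini
        have h7 : (Subgroup.normalizer ((P'' : Subgroup ↥M) : Set ↥M)).index = t := by
          rw [hP''coe, ← hnorm_eq]; rfl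
        rwa [h7] at h6
      have hcardPN' : Nat.card PN' = Nat.card PN :=
        Nat.card_congr (Subgroup.subgroupOfEquivOfLe hPNM).toEquiv
      -- card PN = card P * s with s ∣ card N
      set s := (P : Subgroup H).relIndex PN with hs_def
      have hcardPN : Nat.card PN = Nat.card (P : Subgroup H) * s := by
        have h8 : Nat.card ((P : Subgroup H).subgroupOf PN) * ((P : Subgroup H).subgroupOf PN).index
            = Nat.card PN := Subgroup.card_mul_index _
        have h9 : Nat.card ((P : Subgroup H).subgroupOf PN) = Nat.card (P : Subgroup H) :=
          Nat.card_congr (Subgroup.subgroupOfEquivOfLe hPle).toEquiv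
        rw [← h8, h9]; rfl
      have hsup_in_PN : (P : Subgroup H).subgroupOf PN ⊔ N.subgroupOf PN = ⊤ := by
        apply Subgroup.map_injective PN.subtype_injective
        rw [Subgroup.map_sup, Subgroup.subgroupOf_map_subtype, Subgroup.subgroupOf_map_subtype,
          ← MonoidHom.range_eq_map, PN.range_subtype, inf_of_le_left hPle, inf_of_le_left hNle]
      haveI : (N.subgroupOf PN).Normal := Subgroup.Normal.subgroupOf hNnorm PN
      have hs_dvd : s ∣ Nat.card N := by
        have h10 := aux_index_dvd_card_of_sup_eq_top hsup_in_PN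
        have h11 : Nat.card (N.subgroupOf PN) = Nat.card N :=
          Nat.card_congr (Subgroup.subgroupOfEquivOfLe hNle).toEquiv
        rwa [h11] at h10
      obtain ⟨e, he⟩ := IsPGroup.iff_card.mp P.2
      obtain ⟨f, hf⟩ := IsPGroup.iff_card.mp hNp
      -- t coprime to p
      have hpt : ¬ p ∣ t := by
        intro hpt
        have h0 : t % p = 0 := Nat.mod_eq_zero_of_dvd hpt
        omega
      have ht_dvd : t ∣ Nat.card (P : Subgroup H) * s := by
        rw [← hcardPN, ← hcardPN']; exact ht_dvd_PN'
      have hts : t ∣ s := by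
        have hcop : Nat.Coprime t (Nat.card (P : Subgroup H)) := by
          rw [he]
          exact (Nat.Prime.coprime_iff_not_dvd (Fact.out : p.Prime)).mpr hpt |>.symm.pow_right e
        rw [mul_comm] at ht_dvd
        exact hcop.dvd_of_dvd_mul_right ht_dvd
      have htq : t ∣ q ^ f := hf ▸ hts.trans hs_dvd
      obtain ⟨a, haf, hta⟩ := (Nat.dvd_prime_pow hq).mp htq
      have hrq : r = q := by
        have h12 : r ∣ q ^ a := hta ▸ hcase
        have h13 : r ∣ q := hr.dvd_of_dvd_pow h12
        exact (Nat.prime_dvd_prime_iff_eq hr hq).mp h13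
      have ha_pos : 0 < a := by
        rcases Nat.eq_zero_or_pos a with h0 | h0
        · rw [h0, pow_zero] at hta
          rw [hta] at hcase
          exact absurd (Nat.dvd_one.mp hcase) hr.one_lt.ne'
        · exact h0
      refine ⟨a, ha_pos, ?_, ?_⟩
      · rw [hrq, ← hta]
        exact (hts.trans hs_dvd).trans (Subgroup.card_subgroup_dvd_card N)
      · rw [hrq, ← hta]; exact ht_mod
    · -- quotient case
      set mk := QuotientGroup.mk' N with hmk_def
      have hsurj : Function.Surjective mk := QuotientGroup.mk'_surjective N
      let Q' : Sylow p (H ⧸ N) := P.mapSurjective hsurj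
      have hQ'count : Nat.card (Sylow p (H ⧸ N)) = M.index := by
        rw [Sylow.card_eq_index_normalizer Q']
        have h1 : (Q' : Set (H ⧸ N)) = ((Subgroup.map mk (P : Subgroup H) : Subgroup (H ⧸ N)) : Set (H ⧸ N)) := rfl
        rw [← Subgroup.index_comap_of_surjective _ hsurj, h1,
          Subgroup.comap_normalizer_eq_of_surjective _ hsurj, Subgroup.comap_map_eq,
          QuotientGroup.ker_mk']
      have hcard_lt : Nat.card (H ⧸ N) ≤ n := by
        have h2 : Nat.card H = Nat.card (H ⧸ N) * Nat.card N :=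
          Subgroup.card_eq_card_quotient_mul_card_subgroup N
        have h3 : 1 < Nat.card N := (Subgroup.one_lt_card_iff_ne_bot N).mpr hNbot
        have h4 : 0 < Nat.card (H ⧸ N) := Nat.card_pos
        nlinarith
      obtain ⟨a, ha_pos, ha_dvd, ha_mod⟩ :=
        IH (H ⧸ N) hcard_lt r hr (by rw [hQ'count]; exact hcase)
      refine ⟨a, ha_pos, ha_dvd.trans ?_, ha_mod⟩
      rw [Subgroup.card_eq_card_quotient_mul_card_subgroup N]
      exact Dvd.intro _ rfl

lemma aux_adj {G : Type*} [Group G] [Finite G] (K : Subgroup G) [K.Normal] [Group.IsSolvable ↥K]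
    (h73 : (73 : ℕ) ∣ Nat.card ↥K) (hNc : ¬ ((73 : ℕ)^2 ∣ Nat.card G))
    (r : ℕ) (hr : r.Prime) (hrG : r ∣ Nat.card G) (hco72 : Nat.Coprime r 72)
    (hco73 : Nat.Coprime r 73)
    (harith : ∀ a : ℕ, 0 < a → r ^ a ∣ Nat.card G → r ^ a % 73 = 1 → False) :
    ∃ g : G, orderOf g = 73 * r := by
  classical
  haveI : Fact (Nat.Prime 73) := ⟨by norm_num⟩
  haveI : Fact r.Prime := ⟨hr⟩
  let P : Sylow 73 ↥K := default
  set T : Subgroup G := Subgroup.map K.subtype (P : Subgroup ↥K) with hT_def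
  set W : Subgroup G := (Subgroup.normalizer (T : Set _)) with hW_def
  -- card T = 73
  have hcardPT : Nat.card ↥T = Nat.card ↥(P : Subgroup ↥K) :=
    (Nat.card_congr (Subgroup.equivMapOfInjective _ _ K.subtype_injective).toEquiv).symm
  obtain ⟨e, he⟩ := IsPGroup.iff_card.mp P.2
  have h73P : (73:ℕ) ∣ Nat.card ↥(P : Subgroup ↥K) := P.dvd_card_of_dvd_card h73
  have he1 : e = 1 := by
    rcases Nat.lt_or_ge e 1 with h1 | h1
    · interval_cases e
      rw [he] at h73P; norm_num at h73P
    · rcases Nat.lt_or_ge e 2 with h2 | h2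
      · omega
      · exfalso
        apply hNc
        calc (73:ℕ)^2 ∣ 73 ^ e := pow_dvd_pow _ h2
        _ = Nat.card ↥(P : Subgroup ↥K) := he.symm
        _ ∣ Nat.card ↥K := Subgroup.card_subgroup_dvd_card _
        _ ∣ Nat.card G := Subgroup.card_subgroup_dvd_card _
  have hcardT : Nat.card ↥T = 73 := by rw [hcardPT, he, he1, pow_one]
  -- Frattini
  have hfrat : W ⊔ K = ⊤ := Sylow.normalizer_sup_eq_top P
  -- we show r ∣ card W
  have hrW : r ∣ Nat.card ↥W := by
    by_contra hrW
    -- r ∣ card K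
    have hKindex : K.index = K.relIndex W := by
      rw [← Subgroup.relIndex_top_right, ← hfrat, Subgroup.relIndex_sup_right]
    have hKirel : K.relIndex W ∣ Nat.card ↥W := Subgroup.index_dvd_card _
    have hrK : r ∣ Nat.card ↥K := by
      have h1 : Nat.card ↥K * K.index = Nat.card G := Subgroup.card_mul_index K
      have h2 : r ∣ Nat.card ↥K * K.index := h1.symm ▸ hrG
      rcases hr.dvd_mul.mp h2 with h3 | h3
      · exact h3
      · exact absurd ((hKindex ▸ h3).trans hKirel) hrW
    -- r divides the number of Sylow 73-subgroups of K
    have hrnK : r ∣ Nat.card (Sylow 73 ↥K) := by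
      have h1 : Nat.card ↥((Subgroup.normalizer ((P : Subgroup ↥K) : Set ↥K))) * (Subgroup.normalizer ((P : Subgroup ↥K) : Set ↥K)).index
          = Nat.card ↥K := Subgroup.card_mul_index _
      have h2 : r ∣ Nat.card ↥((Subgroup.normalizer ((P : Subgroup ↥K) : Set ↥K))) * (Subgroup.normalizer ((P : Subgroup ↥K) : Set ↥K)).index :=
        h1.symm ▸ hrK
      rcases hr.dvd_mul.mp h2 with h3 | h3
      · exfalso
        apply hrW
        have h4 : Subgroup.map K.subtype ((Subgroup.normalizer ((P : Subgroup ↥K) : Set ↥K))) ≤ W :=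
          Subgroup.le_normalizer_map _
        have h5 : Nat.card ↥((Subgroup.normalizer ((P : Subgroup ↥K) : Set ↥K)))
            = Nat.card ↥(Subgroup.map K.subtype ((Subgroup.normalizer ((P : Subgroup ↥K) : Set ↥K)))) :=
          Nat.card_congr (Subgroup.equivMapOfInjective _ _ K.subtype_injective).toEquiv
        exact (h5 ▸ h3).trans (Subgroup.card_dvd_of_le h4)
      · rwa [Sylow.card_eq_index_normalizer P]
    obtain ⟨a, ha_pos, ha_dvd, ha_mod⟩ :=
      aux_hall 73 (Nat.card ↥K) ↥K le_rfl r hr hrnK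
    exact harith a ha_pos (ha_dvd.trans (Subgroup.card_subgroup_dvd_card K)) ha_mod
  -- Cauchy in W
  obtain ⟨g₀, hg₀⟩ := exists_prime_orderOf_dvd_card' (G := ↥W) r hrW
  set g : G := (g₀ : G) with hg_def
  have hg : orderOf g = r := by rw [hg_def, Subgroup.orderOf_coe]; exact hg₀
  -- generator of T
  haveI : IsCyclic ↥T := isCyclic_of_prime_card hcardT
  obtain ⟨x, hx⟩ := IsCyclic.exists_generator (α := ↥T)
  have hxord : orderOf (x : G) = 73 := by
    rw [Subgroup.orderOf_coe, orderOf_eq_card_of_forall_mem_zpowers hx, hcardT]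
  -- conjugation
  have hgW : g ∈ W := g₀.2
  have hconj_mem : g * (x : G) * g⁻¹ ∈ T := by
    rw [hW_def] at hgW
    exact (Subgroup.mem_normalizer_iff.mp hgW (x : G)).mp x.2
  obtain ⟨k, hk⟩ := hx ⟨g * (x : G) * g⁻¹, hconj_mem⟩
  have hk' : g * (x : G) * g⁻¹ = (x : G) ^ k := by
    have := congrArg (Subtype.val) hk
    simp only [SubgroupClass.coe_zpow] at this
    exact this.symm
  have hcomm : Commute g (x : G) :=
    aux_conj_commute (by norm_num : Nat.Prime 73) (by simpa using hco72) hxord hg k hk'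
  refine ⟨g * (x : G), ?_⟩
  rw [hcomm.orderOf_mul_eq_mul_orderOf_of_coprime (by rw [hg, hxord]; exact hco73), hg, hxord]
  ring

end AuxLemmas

theorem solvable_normal_not_dvd_73_L3_81 (G : Type*) [Group G] [Finite G]
    (hcard : Nat.card G = 2 ^ 9 * 3 ^ 12 * 5 ^ 2 * 7 * 13 * 41 * 73)
    (hdeg2 : primeGraphDeg G 2 = 3) (hdeg3 : primeGraphDeg G 3 = 2)
    (hdeg5 : primeGraphDeg G 5 = 3) (hdeg7 : primeGraphDeg G 7 = 2)
    (hdeg13 : primeGraphDeg G 13 = 2) (hdeg41 : primeGraphDeg G 41 = 2)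
    (hdeg73 : primeGraphDeg G 73 = 2) :
    ∀ K : Subgroup G, K.Normal → IsSolvable K → ¬ 73 ∣ Nat.card K := by
  intro K hKnorm hKsolv h73
  haveI := hKnorm
  haveI : Group.IsSolvable K := hKsolv
  classical
  have hNc : ¬ ((73 : ℕ)^2 ∣ Nat.card G) := by rw [hcard]; norm_num
  have main : ∀ r ∈ ({5, 7, 13, 41} : Finset ℕ), ∃ g : G, orderOf g = 73 * r := by
    intro r hrmem
    fin_cases hrmem
    · refine aux_adj K h73 hNc 5 (by norm_num) (by rw [hcard]; norm_num) (by norm_num)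
        (by norm_num) ?_
      intro a ha hdvd hmod
      have h2 : a ≤ 2 := by
        by_contra hcon
        have h3 : (5:ℕ) ^ 3 ∣ 5 ^ a := pow_dvd_pow _ (by omega)
        have h4 := h3.trans hdvd
        rw [hcard] at h4
        norm_num at h4
      interval_cases a <;> norm_num at hmod
    · refine aux_adj K h73 hNc 7 (by norm_num) (by rw [hcard]; norm_num) (by norm_num)
        (by norm_num) ?_
      intro a ha hdvd hmod
      have h2 : a ≤ 1 := by
        by_contra hcon
        have h3 : (7:ℕ) ^ 2 ∣ 7 ^ a := pow_dvd_pow _ (by omega)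
        have h4 := h3.trans hdvd
        rw [hcard] at h4
        norm_num at h4
      interval_cases a <;> norm_num at hmod
    · refine aux_adj K h73 hNc 13 (by norm_num) (by rw [hcard]; norm_num) (by norm_num)
        (by norm_num) ?_
      intro a ha hdvd hmod
      have h2 : a ≤ 1 := by
        by_contra hcon
        have h3 : (13:ℕ) ^ 2 ∣ 13 ^ a := pow_dvd_pow _ (by omega)
        have h4 := h3.trans hdvd
        rw [hcard] at h4
        norm_num at h4
      interval_cases a <;> norm_num at hmod
    · refine aux_adj K h73 hNc 41 (by norm_num) (by rw [hcard]; norm_num) (by norm_num)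
        (by norm_num) ?_
      intro a ha hdvd hmod
      have h2 : a ≤ 1 := by
        by_contra hcon
        have h3 : (41:ℕ) ^ 2 ∣ 41 ^ a := pow_dvd_pow _ (by omega)
        have h4 := h3.trans hdvd
        rw [hcard] at h4
        norm_num at h4
      interval_cases a <;> norm_num at hmod
  have h4le : 4 ≤ primeGraphDeg G 73 := by
    unfold primeGraphDeg
    have hsub : ({5, 7, 13, 41} : Finset ℕ) ⊆
        (Nat.card G).primeFactors.filter (fun r => primeGraphAdj G 73 r) := by
      intro r hrmem
      refine Finset.mem_filter.mpr ⟨?_, ?_⟩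
      · refine Nat.mem_primeFactors.mpr ⟨?_, ?_, ?_⟩
        · fin_cases hrmem <;> norm_num
        · fin_cases hrmem <;> (rw [hcard]; norm_num)
        · rw [hcard]; norm_num
      · refine ⟨?_, by norm_num, ?_, by rw [hcard]; norm_num, ?_, main r hrmem⟩
        · fin_cases hrmem <;> norm_num
        · fin_cases hrmem <;> norm_num
        · fin_cases hrmem <;> (rw [hcard]; norm_num)
    calc 4 = ({5, 7, 13, 41} : Finset ℕ).card := by decide
    _ ≤ _ := Finset.card_le_card hsub
  omega
end

section
/- Let G be a finite group with |G| = 2⁴·3·7·19·41²·83³·367 and degree pattern D(G) = (4,3,3,1,4,2,1), i.e., deg_G(2)=4, deg_G(3)=3, deg_G(7)=3, deg_G(19)=1, deg_G(41)=4, deg_G(83)=2, deg_G(367)=1. Then for every solvable normal subgroup K of G, the prime 367 does not divide |K|. -/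
open scoped MatrixGroups

lemma myCauchy {G : Type*} [Group G] [Finite G] {p : ℕ} (hp : p.Prime)
    (h : p ∣ Nat.card G) : ∃ g : G, orderOf g = p := by
  have := Fintype.ofFinite G
  rw [Nat.card_eq_fintype_card] at h
  exact haveI : Fact p.Prime := ⟨hp⟩; exists_prime_orderOf_dvd_card p h

lemma myEqOfLe {G : Type*} [Group G] [Finite G] {A B : Subgroup G} (h : A ≤ B)
    (hc : Nat.card B ≤ Nat.card A) : A = B := by
  have hcc : Nat.card (A.subgroupOf B) = Nat.card A :=
    Nat.card_congr (Subgroup.subgroupOfEquivOfLe h).toEquiv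
  have htop : A.subgroupOf B = ⊤ := by
    apply Subgroup.eq_top_of_card_eq
    rw [hcc]
    exact le_antisymm (Subgroup.card_le_of_le h) hc
  exact le_antisymm h (Subgroup.subgroupOf_eq_top.mp htop)

lemma myKey {Γ : Type*} [Group Γ] {p q : ℕ} (hp : p.Prime) (hq : q.Prime)
    (hco : Nat.Coprime p (q - 1)) {x y : Γ} (hx : orderOf x = q) (hy : orderOf y = p)
    (hN : y ∈ Subgroup.normalizer (Subgroup.zpowers x : Set Γ)) : Commute x y := by
  haveI : Fact q.Prime := ⟨hq⟩
  have hx1 : x ≠ 1 := by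
    intro h; rw [h, orderOf_one] at hx; have := hq.one_lt; omega
  obtain ⟨k, hk⟩ : ∃ k : ℤ, x ^ k = y * x * y⁻¹ :=
    Subgroup.mem_zpowers_iff.mp ((Subgroup.mem_normalizer_iff.mp hN x).mp (Subgroup.mem_zpowers x))
  have key : ∀ n : ℕ, y ^ n * x * (y ^ n)⁻¹ = x ^ (k ^ n) := by
    intro n
    induction n with
    | zero => simp
    | succ n ihn =>
      have h1 : y ^ (n + 1) * x * (y ^ (n + 1))⁻¹ = y * (y ^ n * x * (y ^ n)⁻¹) * y⁻¹ := by
        group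
      rw [h1, ihn, ← conj_zpow, ← hk, ← zpow_mul]
      congr 1
      ring
  have hyp : y ^ p = 1 := by rw [← hy]; exact pow_orderOf_eq_one y
  have hxx : x ^ (k ^ p) = x := by
    have h2 := key p
    rw [hyp, one_mul, inv_one, mul_one] at h2
    exact h2.symm
  have hdvd : (q : ℤ) ∣ k ^ p - 1 := by
    rw [← hx, orderOf_dvd_iff_zpow_eq_one, zpow_sub, zpow_one, hxx, mul_inv_cancel]
  set u : ZMod q := (k : ZMod q) with hu
  have hupow : u ^ p = 1 := by
    have h0 : ((k ^ p - 1 : ℤ) : ZMod q) = 0 := (ZMod.intCast_zmod_eq_zero_iff_dvd _ q).mpr hdvd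
    rw [Int.cast_sub, Int.cast_pow, Int.cast_one, sub_eq_zero] at h0
    exact h0
  have hu0 : u ≠ 0 := by
    intro h0
    have hk0 : (q : ℤ) ∣ k := (ZMod.intCast_zmod_eq_zero_iff_dvd k q).mp h0
    have hxk : x ^ k = 1 := by
      rw [← hx, orderOf_dvd_iff_zpow_eq_one] at hk0; exact hk0
    rw [hxk] at hk
    apply hx1
    have h5 : x = y⁻¹ * 1 * y := by
      rw [hk]; group
    simpa using h5
  have hu1 : u = 1 := by
    have h1 : orderOf u ∣ p := orderOf_dvd_of_pow_eq_one hupow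
    have h2 : orderOf u ∣ q - 1 :=
      orderOf_dvd_of_pow_eq_one (ZMod.pow_card_sub_one_eq_one hu0)
    have h3 : orderOf u ∣ 1 := hco ▸ Nat.dvd_gcd h1 h2
    rw [Nat.dvd_one] at h3
    exact orderOf_eq_one_iff.mp h3
  have hk1 : (q : ℤ) ∣ k - 1 := by
    apply (ZMod.intCast_zmod_eq_zero_iff_dvd _ q).mp
    push_cast
    rw [sub_eq_zero]
    exact_mod_cast hu1
  have hxk : x ^ k = x := by
    obtain ⟨t, ht⟩ := hk1
    have hkk : k = 1 + (q : ℤ) * t := by linarith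
    have hq1 : x ^ (q : ℤ) = 1 := by
      rw [← hx, zpow_natCast]; exact pow_orderOf_eq_one x
    rw [hkk, zpow_add, zpow_one, zpow_mul, hq1, one_zpow, mul_one]
  have hfin : y * x * y⁻¹ = x := by rw [← hk, hxk]
  show x * y = y * x
  calc x * y = (y * x * y⁻¹) * y := by rw [hfin]
    _ = y * x := by group

lemma myMain {G : Type*} [Group G] [Finite G]
    (hcard : Nat.card G = 2 ^ 4 * 3 * 7 * 19 * 41 ^ 2 * 83 ^ 3 * 367)
    (hAB : ¬((∃ g : G, orderOf g = 367 * 7) ∧ (∃ g : G, orderOf g = 367 * 19))) :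
    ∀ (n : ℕ) (K : Subgroup G), Nat.card K = n → K.Normal → IsSolvable K →
      ¬ 367 ∣ Nat.card K := by
  have h367p : Nat.Prime 367 := by norm_num
  set m : ℕ := 2 ^ 4 * 3 * 7 * 19 * 41 ^ 2 * 83 ^ 3 with hm
  have hGm : Nat.card G = 367 * m := by rw [hcard, hm]; ring
  have h367m : ¬ 367 ∣ m := by rw [hm]; decide
  have h367G : 367 ∣ Nat.card G := by rw [hGm]; exact Dvd.intro m rfl
  intro n
  induction n using Nat.strong_induction_on with
  | _ n ih =>
  intro K hKcard hKn hKs hdvd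
  haveI := hKn; haveI := hKs
  -- the commutator subgroup
  set N : Subgroup G := ⁅K, K⁆ with hN
  haveI hNnormal : N.Normal := Subgroup.commutator_normal K K
  have hNK : N ≤ K := by
    rw [hN, Subgroup.commutator_le]
    intro a ha b hb
    rw [commutatorElement_def]
    exact K.mul_mem (K.mul_mem (K.mul_mem ha hb) (K.inv_mem ha)) (K.inv_mem hb)
  haveI hNs : IsSolvable N :=
    haveI : Group.IsSolvable K := hKs; solvable_of_solvable_injective (Subgroup.inclusion_injective hNK)
  have hKnleN : ¬ K ≤ N := by
    intro hle
    have hKN : N = K := le_antisymm hNK hle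
    have hmap : ∀ j, (derivedSeries K j).map K.subtype = K := by
      intro j
      induction j with
      | zero =>
        rw [derivedSeries_zero, ← MonoidHom.range_eq_map, Subgroup.range_subtype]
      | succ j ihj =>
        rw [derivedSeries_succ, Subgroup.map_commutator, ihj, ← hN, hKN]
    obtain ⟨j, hj⟩ := hKs.solvable
    have hKbot : (⊥ : Subgroup K).map K.subtype = K := hj ▸ hmap j
    rw [Subgroup.map_bot] at hKbot
    have : Nat.card K = 1 := by rw [← hKbot]; exact Subgroup.card_bot
    rw [this] at hdvd
    exact absurd (Nat.dvd_one.mp hdvd) (by norm_num)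
  have hNlt : Nat.card N < Nat.card K := by
    refine lt_of_le_of_ne (Subgroup.card_le_of_le hNK) fun heq => ?_
    exact hKnleN (myEqOfLe hNK heq.ge).ge
  have hN367 : ¬ 367 ∣ Nat.card N := ih (Nat.card N) (hKcard ▸ hNlt) N rfl hNnormal hNs
  -- the subgroup H
  set H : Subgroup G :=
    { carrier := {g : G | g ∈ K ∧ g ^ m ∈ N}
      one_mem' := ⟨K.one_mem, by simpa using N.one_mem⟩
      mul_mem' := by
        rintro a b ⟨haK, haN⟩ ⟨hbK, hbN⟩
        refine ⟨K.mul_mem haK hbK, ?_⟩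
        set π : G →* G ⧸ N := QuotientGroup.mk' N with hπ
        have πone : ∀ x : G, π x = 1 ↔ x ∈ N := fun x => QuotientGroup.eq_one_iff x
        have hcomm : π a * π b = π b * π a := by
          apply commutatorElement_eq_one_iff_mul_comm.mp
          rw [← map_commutatorElement]
          exact (πone _).mpr (Subgroup.commutator_mem_commutator haK hbK)
        have h1 : π ((a * b) ^ m) = 1 := by
          rw [map_pow, map_mul, Commute.mul_pow hcomm, ← map_pow, ← map_pow,
            (πone _).mpr haN, (πone _).mpr hbN, one_mul]
        exact (πone _).mp h1
      inv_mem' := by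
        rintro a ⟨haK, haN⟩
        exact ⟨K.inv_mem haK, by rw [inv_pow]; exact N.inv_mem haN⟩ } with hHdef
  have hmemH : ∀ g : G, g ∈ H ↔ g ∈ K ∧ g ^ m ∈ N := fun g => Iff.rfl
  haveI hHnormal : H.Normal := by
    constructor
    intro g hg x
    obtain ⟨hgK, hgN⟩ := (hmemH g).mp hg
    refine (hmemH _).mpr ⟨hKn.conj_mem g hgK x, ?_⟩
    rw [conj_pow]
    exact hNnormal.conj_mem _ hgN x
  have hHK : H ≤ K := fun g hg => ((hmemH g).mp hg).1
  have hH367 : ¬ 367 ∣ Nat.card H := by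
    intro hdH
    obtain ⟨x, hx⟩ := myCauchy h367p hdH
    have hxo : orderOf (x : G) = 367 := by
      rw [← hx]; exact orderOf_injective H.subtype H.subtype_injective x
    have hco : (orderOf (x : G)).Coprime m := by
      rw [hxo]; exact (Nat.Prime.coprime_iff_not_dvd h367p).mpr h367m
    have hordm : orderOf ((x : G) ^ m) = 367 := by rw [hco.orderOf_pow, hxo]
    have hmem : (x : G) ^ m ∈ N := ((hmemH _).mp x.2).2
    have : 367 ∣ Nat.card N := hordm ▸ N.orderOf_dvd_natCard hmem
    exact hN367 this
  have hx367 : ∀ x ∈ K, x ^ (367 : ℕ) ∈ H := by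
    intro x hx
    refine (hmemH _).mpr ⟨K.pow_mem hx 367, ?_⟩
    have h1 : x ^ (367 * m) = 1 := by
      rw [← hGm]
      exact orderOf_dvd_iff_pow_eq_one.mp (orderOf_dvd_natCard x)
    rw [← pow_mul, h1]
    exact N.one_mem
  -- quotient
  set π : G →* G ⧸ H := QuotientGroup.mk' H with hπ
  set Khat : Subgroup (G ⧸ H) := K.map π with hKhat
  haveI hKhatN : Khat.Normal := hKn.map π (QuotientGroup.mk'_surjective H)
  have hpowKhat : ∀ u ∈ Khat, u ^ (367 : ℕ) = 1 := by
    rintro _ ⟨x, hxK, rfl⟩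
    rw [← map_pow]
    exact (QuotientGroup.eq_one_iff _).mpr (hx367 x hxK)
  have hcardGhat : Nat.card G = Nat.card (G ⧸ H) * Nat.card H :=
    Subgroup.card_eq_card_quotient_mul_card_subgroup H
  have hGhat_dvd : Nat.card (G ⧸ H) ∣ Nat.card G := Dvd.intro _ hcardGhat.symm
  have h367Ghat : 367 ∣ Nat.card (G ⧸ H) := by
    rcases (Nat.Prime.dvd_mul h367p).mp (hcardGhat ▸ h367G) with h | h
    · exact h
    · exact absurd h hH367
  have hd1 : Nat.card Khat ≠ 1 := by
    intro h1
    have hbot : Khat = ⊥ := Subgroup.card_eq_one.mp h1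
    have hKH : K ≤ H := by
      intro x hx
      have : π x ∈ Khat := Subgroup.mem_map_of_mem π hx
      rw [hbot, Subgroup.mem_bot] at this
      exact (QuotientGroup.eq_one_iff _).mp this
    exact hH367 (hdvd.trans (Subgroup.card_dvd_of_le hKH))
  have hqprime : ∀ q : ℕ, q.Prime → q ∣ Nat.card Khat → q = 367 := by
    intro q hq hqd
    obtain ⟨u, hu⟩ := myCauchy hq hqd
    have huo : orderOf (u : G ⧸ H) = q := by
      rw [← hu]; exact orderOf_injective Khat.subtype Khat.subtype_injective u
    have : q ∣ 367 := by
      rw [← huo]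
      exact orderOf_dvd_of_pow_eq_one (hpowKhat (u : G ⧸ H) u.2)
    exact (Nat.prime_dvd_prime_iff_eq hq h367p).mp this
  have hcop : Nat.Coprime (Nat.card Khat) m := by
    by_contra hg
    obtain ⟨q, hq, hqg⟩ := Nat.exists_prime_and_dvd hg
    have hq367 : q = 367 := hqprime q hq (hqg.trans (Nat.gcd_dvd_left _ _))
    exact h367m (hq367 ▸ hqg.trans (Nat.gcd_dvd_right _ _))
  have hdKhat : Nat.card Khat = 367 := by
    have hdvd367 : Nat.card Khat ∣ 367 :=
      hcop.dvd_of_dvd_mul_right ((Subgroup.card_subgroup_dvd_card Khat).trans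
        (hGhat_dvd.trans (hGm ▸ dvd_refl _)))
    rcases (Nat.Prime.eq_one_or_self_of_dvd h367p _ hdvd367) with h | h
    · exact absurd h hd1
    · exact h
  obtain ⟨ξ, hξ⟩ := myCauchy (G := Khat) h367p (by rw [hdKhat])
  have hxhat : orderOf (ξ : G ⧸ H) = 367 := by
    rw [← hξ]; exact orderOf_injective Khat.subtype Khat.subtype_injective ξ
  have hzx : Subgroup.zpowers (ξ : G ⧸ H) = Khat := by
    apply myEqOfLe (Subgroup.zpowers_le.mpr ξ.2)
    rw [Nat.card_zpowers, hxhat, hdKhat]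
  -- the claim
  have claim : ∀ p : ℕ, p.Prime → p ≠ 367 → p ∣ Nat.card G → Nat.Coprime p (367 - 1) →
      Nat.Coprime 367 (p - 1) → ¬ (p * p ∣ Nat.card G) → ∃ g : G, orderOf g = 367 * p := by
    intro p hp hp367 hpG hco1 hco2 hpsq
    haveI : Fact p.Prime := ⟨hp⟩
    have cop367p : Nat.Coprime 367 p := (Nat.coprime_primes h367p hp).mpr (Ne.symm hp367)
    by_cases hpH : p ∣ Nat.card H
    · -- p divides |H| : use Frattini and the Sylow p-subgroup of H
      obtain ⟨P⟩ : Nonempty (Sylow p H) := Sylow.nonempty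
      have hcardH0 : Nat.card H ≠ 0 := Nat.card_pos.ne'
      have hfac : (Nat.card H).factorization p = 1 := by
        have h1 : 1 ≤ (Nat.card H).factorization p := by
          rw [← hp.pow_dvd_iff_le_factorization hcardH0]
          simpa using hpH
        have h2 : ¬ 2 ≤ (Nat.card H).factorization p := by
          intro h2
          apply hpsq
          have hsq : p ^ 2 ∣ Nat.card H := (hp.pow_dvd_iff_le_factorization hcardH0).mpr h2
          have : p * p ∣ Nat.card H := by rwa [← pow_two]
          exact this.trans (Subgroup.card_subgroup_dvd_card H)
        omega
      have hcardP : Nat.card P = p := by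
        rw [Sylow.card_eq_multiplicity, hfac, pow_one]
      set P' : Subgroup G := Subgroup.map H.subtype (P : Subgroup H) with hP'
      have hcardP' : Nat.card P' = p := by
        rw [← hcardP]
        exact (Nat.card_congr
          (Subgroup.equivMapOfInjective _ H.subtype H.subtype_injective).toEquiv).symm
      have hfr : Subgroup.normalizer (P' : Set G) ⊔ H = ⊤ := Sylow.normalizer_sup_eq_top P
      set M : Subgroup G := Subgroup.normalizer (P' : Set G) with hMdef
      have hsurj : Function.Surjective (π.comp M.subtype) := by
        intro w
        obtain ⟨g, rfl⟩ := QuotientGroup.mk'_surjective H w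
        have hg : g ∈ M ⊔ H := by rw [hfr]; exact Subgroup.mem_top g
        rw [← SetLike.mem_coe, Subgroup.mul_normal M H] at hg
        obtain ⟨a, ha, b, hb, rfl⟩ := hg
        refine ⟨⟨a, ha⟩, ?_⟩
        have hb1 : π b = 1 := (QuotientGroup.eq_one_iff b).mpr hb
        show π a = π (a * b)
        rw [map_mul, hb1, mul_one]
      have h367M : 367 ∣ Nat.card M :=
        h367Ghat.trans (Subgroup.card_dvd_of_surjective _ hsurj)
      obtain ⟨y₀, hy₀⟩ := myCauchy (G := M) h367p h367M
      have hy : orderOf (y₀ : G) = 367 := by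
        rw [← hy₀]; exact orderOf_injective M.subtype M.subtype_injective y₀
      obtain ⟨z₀, hz₀⟩ := myCauchy (G := P') hp (by rw [hcardP'])
      have hz : orderOf (z₀ : G) = p := by
        rw [← hz₀]; exact orderOf_injective P'.subtype P'.subtype_injective z₀
      have hzp : Subgroup.zpowers (z₀ : G) = P' := by
        apply myEqOfLe (Subgroup.zpowers_le.mpr z₀.2)
        rw [Nat.card_zpowers, hz, hcardP']
      have hyn : (y₀ : G) ∈ Subgroup.normalizer (Subgroup.zpowers (z₀ : G) : Set G) := by
        rw [hzp]; exact y₀.2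
      have hcomm : Commute (z₀ : G) (y₀ : G) := myKey h367p hp hco2 hz hy hyn
      refine ⟨(y₀ : G) * (z₀ : G), ?_⟩
      rw [hcomm.symm.orderOf_mul_eq_mul_orderOf_of_coprime (by rw [hy, hz]; exact cop367p),
        hy, hz]
    · -- p does not divide |H| : work in the quotient G ⧸ H
      have hpGhat : p ∣ Nat.card (G ⧸ H) := by
        rcases (Nat.Prime.dvd_mul hp).mp (hcardGhat ▸ hpG) with h | h
        · exact h
        · exact absurd h hpH
      obtain ⟨w, hw⟩ := myCauchy hp hpGhat
      have hwn : w ∈ Subgroup.normalizer (Subgroup.zpowers (ξ : G ⧸ H) : Set (G ⧸ H)) := by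
        rw [hzx, Subgroup.normalizer_eq_top_iff.mpr hKhatN]
        exact Subgroup.mem_top w
      have hcomm : Commute (ξ : G ⧸ H) w := myKey hp h367p hco1 hxhat hw hwn
      have hord : orderOf ((ξ : G ⧸ H) * w) = 367 * p := by
        rw [hcomm.orderOf_mul_eq_mul_orderOf_of_coprime (by rw [hxhat, hw]; exact cop367p),
          hxhat, hw]
      obtain ⟨g, hg⟩ := QuotientGroup.mk'_surjective H ((ξ : G ⧸ H) * w)
      have hdvd2 : 367 * p ∣ orderOf g := by
        rw [← hord, ← hg]
        exact orderOf_map_dvd (QuotientGroup.mk' H) g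
      have hne : orderOf g ≠ 0 := (orderOf_pos g).ne'
      exact ⟨g ^ (orderOf g / (367 * p)), orderOf_pow_orderOf_div hne hdvd2⟩
  have A7 : ∃ g : G, orderOf g = 367 * 7 :=
    claim 7 (by norm_num) (by norm_num) (by rw [hGm, hm]; norm_num) (by decide) (by decide)
      (by rw [hGm, hm]; decide)
  have A19 : ∃ g : G, orderOf g = 367 * 19 :=
    claim 19 (by norm_num) (by norm_num) (by rw [hGm, hm]; norm_num) (by decide) (by decide)
      (by rw [hGm, hm]; decide)
  exact hAB ⟨A7, A19⟩

theorem solvable_normal_not_dvd_367_L3_83 (G : Type*) [Group G] [Finite G]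
    (hcard : Nat.card G = 2 ^ 4 * 3 * 7 * 19 * 41 ^ 2 * 83 ^ 3 * 367)
    (hdeg2 : primeGraphDeg G 2 = 4) (hdeg3 : primeGraphDeg G 3 = 3)
    (hdeg7 : primeGraphDeg G 7 = 3) (hdeg19 : primeGraphDeg G 19 = 1)
    (hdeg41 : primeGraphDeg G 41 = 4) (hdeg83 : primeGraphDeg G 83 = 2)
    (hdeg367 : primeGraphDeg G 367 = 1) :
    ∀ K : Subgroup G, K.Normal → IsSolvable K → ¬ 367 ∣ Nat.card K := by
  intro K hKn hKs
  refine myMain hcard ?_ (Nat.card K) K rfl hKn hKs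
  rintro ⟨⟨g7, h7⟩, ⟨g19, h19⟩⟩
  have adj7 : primeGraphAdj G 367 7 :=
    ⟨by norm_num, by norm_num, by norm_num, by rw [hcard]; norm_num, by rw [hcard]; norm_num,
      ⟨g7, h7⟩⟩
  have adj19 : primeGraphAdj G 367 19 :=
    ⟨by norm_num, by norm_num, by norm_num, by rw [hcard]; norm_num, by rw [hcard]; norm_num,
      ⟨g19, h19⟩⟩
  have mem7 : 7 ∈ (Nat.card G).primeFactors :=
    Nat.mem_primeFactors.mpr ⟨by norm_num, by rw [hcard]; norm_num, by rw [hcard]; norm_num⟩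
  have mem19 : 19 ∈ (Nat.card G).primeFactors :=
    Nat.mem_primeFactors.mpr ⟨by norm_num, by rw [hcard]; norm_num, by rw [hcard]; norm_num⟩
  classical
  unfold primeGraphDeg at hdeg367
  obtain ⟨a, ha⟩ := Finset.card_eq_one.mp hdeg367
  have h7m : (7 : ℕ) ∈ ({a} : Finset ℕ) := ha ▸ Finset.mem_filter.mpr ⟨mem7, adj7⟩
  have h19m : (19 : ℕ) ∈ ({a} : Finset ℕ) := ha ▸ Finset.mem_filter.mpr ⟨mem19, adj19⟩
  rw [Finset.mem_singleton] at h7m h19m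
  omega
end
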